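/- With the setup above, the matrix \hat{Q}_1 = (Q_1 + Q_2 P)(I + P'P)^{-1/2} satisfies ‖\hat{Q}_1 - Q_1‖_2 ≤ 2‖P‖_2, where ‖·‖_2 is the spectral norm. -/

import Mathlib

open Matrix

/-- The spectral norm (largest singular value) of a real matrix. -/
noncomputable def specNorm {m n : Type*} [Fintype m] [Fintype n] [DecidableEq n]
    (M : Matrix m n ℝ) : ℝ :=
  ‖LinearMap.toContinuousLinearMap (Matrix.toEuclideanLin M)‖

section Aux

variable {m n k : Type*} [Fintype m] [Fintype n] [Fintype k]

lemma specNorm_nonneg [DecidableEq n] (M : Matrix m n ℝ) : 0 ≤ specNorm M := norm_nonneg _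

lemma toEuclideanLin_mul_apply [DecidableEq n] [DecidableEq k]
    (A : Matrix m n ℝ) (B : Matrix n k ℝ) (v : EuclideanSpace ℝ k) :
    toEuclideanLin (A * B) v = toEuclideanLin A (toEuclideanLin B v) := by
  simp [toEuclideanLin_apply, mulVec_mulVec]

lemma toEuclideanLin_one_apply [DecidableEq n] (v : EuclideanSpace ℝ n) :
    toEuclideanLin (1 : Matrix n n ℝ) v = v := by
  simp [toEuclideanLin_apply]

lemma norm_toEuclideanLin_le [DecidableEq n] (M : Matrix m n ℝ) (v : EuclideanSpace ℝ n) :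
    ‖toEuclideanLin M v‖ ≤ specNorm M * ‖v‖ :=
  (LinearMap.toContinuousLinearMap (Matrix.toEuclideanLin M)).le_opNorm v

lemma specNorm_le_of_forall [DecidableEq n] (M : Matrix m n ℝ) (c : ℝ) (hc : 0 ≤ c)
    (h : ∀ v : EuclideanSpace ℝ n, ‖toEuclideanLin M v‖ ≤ c * ‖v‖) :
    specNorm M ≤ c :=
  ContinuousLinearMap.opNorm_le_bound _ hc h

lemma specNorm_mul_le [DecidableEq n] [DecidableEq k] (A : Matrix m n ℝ) (B : Matrix n k ℝ) :
    specNorm (A * B) ≤ specNorm A * specNorm B := by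
  apply specNorm_le_of_forall _ _ (mul_nonneg (specNorm_nonneg _) (specNorm_nonneg _))
  intro v
  rw [toEuclideanLin_mul_apply]
  calc ‖toEuclideanLin A (toEuclideanLin B v)‖ ≤ specNorm A * ‖toEuclideanLin B v‖ :=
        norm_toEuclideanLin_le _ _
    _ ≤ specNorm A * (specNorm B * ‖v‖) :=
        mul_le_mul_of_nonneg_left (norm_toEuclideanLin_le _ _) (specNorm_nonneg _)
    _ = specNorm A * specNorm B * ‖v‖ := by ring

lemma specNorm_add_le [DecidableEq n] (A B : Matrix m n ℝ) :
    specNorm (A + B) ≤ specNorm A + specNorm B := by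
  unfold specNorm
  rw [map_add, map_add]
  exact norm_add_le _ _

lemma specNorm_neg [DecidableEq n] (A : Matrix m n ℝ) : specNorm (-A) = specNorm A := by
  unfold specNorm
  rw [map_neg, map_neg, norm_neg]

lemma inner_toEuclideanLin_transpose [DecidableEq n] [DecidableEq m]
    (A : Matrix m n ℝ) (w : EuclideanSpace ℝ m) (v : EuclideanSpace ℝ n) :
    (inner ℝ (toEuclideanLin Aᵀ w) v : ℝ) = inner ℝ w (toEuclideanLin A v) := by
  have h : (Aᵀ : Matrix n m ℝ) = Aᴴ := by ext i j; simp [conjTranspose_apply]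
  rw [h, Matrix.toEuclideanLin_conjTranspose_eq_adjoint, LinearMap.adjoint_inner_left]

lemma specNorm_transpose_le [DecidableEq n] [DecidableEq m] (A : Matrix m n ℝ) :
    specNorm Aᵀ ≤ specNorm A := by
  apply specNorm_le_of_forall _ _ (specNorm_nonneg _)
  intro v
  rcases eq_or_lt_of_le (norm_nonneg (toEuclideanLin Aᵀ v)) with h0 | h0
  · rw [← h0]; exact mul_nonneg (specNorm_nonneg _) (norm_nonneg _)
  · have key : ‖toEuclideanLin Aᵀ v‖ * ‖toEuclideanLin Aᵀ v‖ ≤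
        specNorm A * ‖v‖ * ‖toEuclideanLin Aᵀ v‖ := by
      calc ‖toEuclideanLin Aᵀ v‖ * ‖toEuclideanLin Aᵀ v‖
          = inner ℝ (toEuclideanLin Aᵀ v) (toEuclideanLin Aᵀ v) :=
            (real_inner_self_eq_norm_mul_norm _).symm
        _ = inner ℝ v (toEuclideanLin A (toEuclideanLin Aᵀ v)) :=
            inner_toEuclideanLin_transpose _ _ _
        _ ≤ ‖v‖ * ‖toEuclideanLin A (toEuclideanLin Aᵀ v)‖ := real_inner_le_norm _ _
        _ ≤ ‖v‖ * (specNorm A * ‖toEuclideanLin Aᵀ v‖) :=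
            mul_le_mul_of_nonneg_left (norm_toEuclideanLin_le _ _) (norm_nonneg _)
        _ = specNorm A * ‖v‖ * ‖toEuclideanLin Aᵀ v‖ := by ring
    exact le_of_mul_le_mul_right key h0

/-- If the columns of `Q` are orthonormal then `toEuclideanLin Q` is an isometry. -/
lemma norm_toEuclideanLin_eq_of_orthonormal [DecidableEq n] [DecidableEq m]
    (Q : Matrix m n ℝ) (hQ : Qᵀ * Q = 1) (v : EuclideanSpace ℝ n) :
    ‖toEuclideanLin Q v‖ = ‖v‖ := by
  have h : ‖toEuclideanLin Q v‖ * ‖toEuclideanLin Q v‖ = ‖v‖ * ‖v‖ := by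
    calc ‖toEuclideanLin Q v‖ * ‖toEuclideanLin Q v‖
        = inner ℝ (toEuclideanLin Q v) (toEuclideanLin Q v) :=
          (real_inner_self_eq_norm_mul_norm _).symm
      _ = inner ℝ (toEuclideanLin Qᵀ (toEuclideanLin Q v)) v := by
          rw [← real_inner_comm, inner_toEuclideanLin_transpose, real_inner_comm]
      _ = inner ℝ ((v : EuclideanSpace ℝ n)) v := by
          rw [← toEuclideanLin_mul_apply, hQ, toEuclideanLin_one_apply]
      _ = ‖v‖ * ‖v‖ := real_inner_self_eq_norm_mul_norm _
  exact (mul_self_inj_of_nonneg (norm_nonneg _) (norm_nonneg _)).mp h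

lemma specNorm_le_one_of_orthonormal [DecidableEq n] [DecidableEq m]
    (Q : Matrix m n ℝ) (hQ : Qᵀ * Q = 1) : specNorm Q ≤ 1 := by
  apply specNorm_le_of_forall _ _ zero_le_one
  intro v
  rw [norm_toEuclideanLin_eq_of_orthonormal Q hQ, one_mul]

/-- If `‖v‖ ≤ ‖M v‖` for all `v` and `M` is invertible, then `specNorm M⁻¹ ≤ 1`. -/
lemma specNorm_inv_le_one [DecidableEq n] (M : Matrix n n ℝ) (hM : IsUnit M.det)
    (h : ∀ v : EuclideanSpace ℝ n, ‖v‖ ≤ ‖toEuclideanLin M v‖) :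
    specNorm M⁻¹ ≤ 1 := by
  apply specNorm_le_of_forall _ _ zero_le_one
  intro v
  rw [one_mul]
  calc ‖toEuclideanLin M⁻¹ v‖ ≤ ‖toEuclideanLin M (toEuclideanLin M⁻¹ v)‖ := h _
    _ = ‖toEuclideanLin (M * M⁻¹) v‖ := by rw [toEuclideanLin_mul_apply]
    _ = ‖v‖ := by rw [Matrix.mul_nonsing_inv M hM, toEuclideanLin_one_apply]

end Aux

/-- With `Q = (Q₁, Q₂)` orthogonal and `S` the symmetric positive
definite square root of `I + PᵀP`, the matrix `Q̂₁ = (Q₁ + Q₂P) S⁻¹` satisfies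
`‖Q̂₁ - Q₁‖₂ ≤ 2‖P‖₂`. -/
theorem hatQ_one_specNorm_dist_le_two_specNorm_P
    {s r t : ℕ}
    (Q₁ : Matrix (Fin s) (Fin r) ℝ) (Q₂ : Matrix (Fin s) (Fin t) ℝ)
    (P : Matrix (Fin t) (Fin r) ℝ)
    (hQ1 : Q₁ᵀ * Q₁ = 1) (hQ2 : Q₂ᵀ * Q₂ = 1) (hQ12 : Q₁ᵀ * Q₂ = 0)
    (hQfull : Q₁ * Q₁ᵀ + Q₂ * Q₂ᵀ = 1)
    (S : Matrix (Fin r) (Fin r) ℝ) (hS : S.PosDef)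
    (hSsq : S * S = 1 + Pᵀ * P) :
    specNorm ((Q₁ + Q₂ * P) * S⁻¹ - Q₁) ≤ 2 * specNorm P := by
  have hSt : Sᵀ = S := hS.isHermitian
  have hSdet : IsUnit S.det := isUnit_iff_isUnit_det S |>.mp hS.isUnit
  have hSinvS : S⁻¹ * S = 1 := Matrix.nonsing_inv_mul S hSdet
  have hSSinv : S * S⁻¹ = 1 := Matrix.mul_nonsing_inv S hSdet
  -- S+1 is positive definite
  have hS1 : (S + 1).PosDef := hS.add_posSemidef Matrix.PosSemidef.one
  have hS1det : IsUnit (S + 1).det := isUnit_iff_isUnit_det _ |>.mp hS1.isUnit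
  -- ‖Sv‖² = ‖v‖² + ‖Pv‖²
  have hSv : ∀ v : EuclideanSpace ℝ (Fin r),
      ‖toEuclideanLin S v‖ * ‖toEuclideanLin S v‖ =
        ‖v‖ * ‖v‖ + ‖toEuclideanLin P v‖ * ‖toEuclideanLin P v‖ := by
    intro v
    calc ‖toEuclideanLin S v‖ * ‖toEuclideanLin S v‖
        = inner ℝ (toEuclideanLin S v) (toEuclideanLin S v) :=
          (real_inner_self_eq_norm_mul_norm _).symm
      _ = inner ℝ (toEuclideanLin Sᵀ (toEuclideanLin S v)) v :=
          (inner_toEuclideanLin_transpose _ _ _).symm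
      _ = inner ℝ (toEuclideanLin (1 + Pᵀ * P) v) v := by
          rw [hSt, ← toEuclideanLin_mul_apply, hSsq]
      _ = inner ℝ v v + (inner ℝ (toEuclideanLin (Pᵀ * P) v) v : ℝ) := by
          rw [map_add, LinearMap.add_apply, inner_add_left, toEuclideanLin_one_apply]
      _ = ‖v‖ * ‖v‖ + ‖toEuclideanLin P v‖ * ‖toEuclideanLin P v‖ := by
          rw [real_inner_self_eq_norm_mul_norm,
            toEuclideanLin_mul_apply, inner_toEuclideanLin_transpose,
            real_inner_comm, real_inner_self_eq_norm_mul_norm]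
  have hSlow : ∀ v : EuclideanSpace ℝ (Fin r), ‖v‖ ≤ ‖toEuclideanLin S v‖ := by
    intro v
    have h := hSv v
    nlinarith [norm_nonneg (toEuclideanLin S v), norm_nonneg v,
      norm_nonneg (toEuclideanLin P v)]
  have hSinv_le : specNorm S⁻¹ ≤ 1 := specNorm_inv_le_one S hSdet hSlow
  -- ‖(S+1)v‖ ≥ ‖v‖
  have hS1low : ∀ v : EuclideanSpace ℝ (Fin r), ‖v‖ ≤ ‖toEuclideanLin (S + 1) v‖ := by
    intro v
    have hpos : (0:ℝ) ≤ inner ℝ (toEuclideanLin S v) v := by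
      rcases eq_or_ne v 0 with rfl | hv
      · simp
      · have hv' : (WithLp.equiv 2 (Fin r → ℝ)) v ≠ 0 := fun h => hv (by
          simpa using congrArg (WithLp.equiv 2 (Fin r → ℝ)).symm h)
        have := (hS.dotProduct_mulVec_pos hv').le
        rw [real_inner_comm, EuclideanSpace.inner_eq_star_dotProduct]
        simpa [toEuclideanLin_apply, dotProduct_comm] using this
    have h : ‖v‖ * ‖v‖ ≤ ‖toEuclideanLin (S+1) v‖ * ‖toEuclideanLin (S+1) v‖ := by
      have hexp : (inner ℝ (toEuclideanLin (S+1) v) (toEuclideanLin (S+1) v) : ℝ) =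
          inner ℝ (toEuclideanLin S v) (toEuclideanLin S v) +
          2 * inner ℝ (toEuclideanLin S v) v + inner ℝ v v := by
        rw [map_add, LinearMap.add_apply, toEuclideanLin_one_apply, inner_add_add_self,
          real_inner_comm v (toEuclideanLin S v)]
        ring
      have h1 := hSv v
      nlinarith [real_inner_self_eq_norm_mul_norm (toEuclideanLin (S+1) v),
        real_inner_self_eq_norm_mul_norm (toEuclideanLin S v),
        real_inner_self_eq_norm_mul_norm v,
        norm_nonneg (toEuclideanLin P v)]
    nlinarith [norm_nonneg v, norm_nonneg (toEuclideanLin (S+1) v)]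
  have hS1inv_le : specNorm (S + 1)⁻¹ ≤ 1 := specNorm_inv_le_one _ hS1det hS1low
  -- ‖P S⁻¹‖ ≤ 1
  have hPSinv_le_one : specNorm (P * S⁻¹) ≤ 1 := by
    apply specNorm_le_of_forall _ _ zero_le_one
    intro v
    rw [one_mul, toEuclideanLin_mul_apply]
    set y := toEuclideanLin S⁻¹ v with hy
    have hSy : toEuclideanLin S y = v := by
      rw [hy, ← toEuclideanLin_mul_apply, hSSinv, toEuclideanLin_one_apply]
    have h := hSv y
    rw [hSy] at h
    nlinarith [norm_nonneg (toEuclideanLin P y), norm_nonneg v, norm_nonneg y]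
  -- ‖S⁻¹ Pᵀ‖ ≤ 1 via transpose
  have hSinvT : (S⁻¹)ᵀ = S⁻¹ := by
    rw [Matrix.transpose_nonsing_inv, hSt]
  have hSinvPt_le_one : specNorm (S⁻¹ * Pᵀ) ≤ 1 := by
    have h : S⁻¹ * Pᵀ = (P * S⁻¹)ᵀ := by rw [Matrix.transpose_mul, hSinvT]
    rw [h]
    exact (specNorm_transpose_le _).trans hPSinv_le_one
  -- key identity : 1 - S⁻¹ = (S⁻¹ * Pᵀ) * (P * (S+1)⁻¹)
  have hkey : (1 : Matrix (Fin r) (Fin r) ℝ) - S⁻¹ = (S⁻¹ * Pᵀ) * (P * (S + 1)⁻¹) := by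
    have h1 : (S - 1) * (S + 1) = Pᵀ * P := by
      rw [sub_mul, mul_add, mul_one, one_mul, hSsq]
      abel
    have h2 : S - 1 = Pᵀ * P * (S + 1)⁻¹ := by
      have := congrArg (· * (S + 1)⁻¹) h1
      simpa [Matrix.mul_assoc, Matrix.mul_nonsing_inv _ hS1det] using this
    calc (1 : Matrix (Fin r) (Fin r) ℝ) - S⁻¹ = S⁻¹ * (S - 1) := by
          rw [Matrix.mul_sub, hSinvS, Matrix.mul_one]
      _ = S⁻¹ * (Pᵀ * P * (S + 1)⁻¹) := by rw [← h2]
      _ = (S⁻¹ * Pᵀ) * (P * (S + 1)⁻¹) := by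
          simp only [Matrix.mul_assoc]
  -- bound on ‖1 - S⁻¹‖
  have h1Sinv : specNorm ((1 : Matrix (Fin r) (Fin r) ℝ) - S⁻¹) ≤ specNorm P := by
    rw [hkey]
    calc specNorm ((S⁻¹ * Pᵀ) * (P * (S + 1)⁻¹))
        ≤ specNorm (S⁻¹ * Pᵀ) * specNorm (P * (S + 1)⁻¹) := specNorm_mul_le _ _
      _ ≤ 1 * (specNorm P * specNorm (S + 1)⁻¹) := by
          apply mul_le_mul hSinvPt_le_one (specNorm_mul_le _ _) (specNorm_nonneg _) zero_le_one
      _ ≤ 1 * (specNorm P * 1) :=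
          mul_le_mul_of_nonneg_left
            (mul_le_mul_of_nonneg_left hS1inv_le (specNorm_nonneg _)) zero_le_one
      _ = specNorm P := by ring
  -- decompose
  have hdecomp : (Q₁ + Q₂ * P) * S⁻¹ - Q₁ =
      -(Q₁ * (1 - S⁻¹)) + Q₂ * (P * S⁻¹) := by
    rw [Matrix.add_mul, Matrix.mul_sub, Matrix.mul_one]
    simp only [Matrix.mul_assoc]
    abel
  rw [hdecomp]
  have hQ1n : specNorm Q₁ ≤ 1 := specNorm_le_one_of_orthonormal _ hQ1
  have hQ2n : specNorm Q₂ ≤ 1 := specNorm_le_one_of_orthonormal _ hQ2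
  calc specNorm (-(Q₁ * (1 - S⁻¹)) + Q₂ * (P * S⁻¹))
      ≤ specNorm (-(Q₁ * (1 - S⁻¹))) + specNorm (Q₂ * (P * S⁻¹)) := specNorm_add_le _ _
    _ = specNorm (Q₁ * (1 - S⁻¹)) + specNorm (Q₂ * (P * S⁻¹)) := by rw [specNorm_neg]
    _ ≤ specNorm Q₁ * specNorm (1 - S⁻¹) + specNorm Q₂ * specNorm (P * S⁻¹) :=
        add_le_add (specNorm_mul_le _ _) (specNorm_mul_le _ _)
    _ ≤ 1 * specNorm P + 1 * (specNorm P * specNorm S⁻¹) := by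
        apply add_le_add
        · exact mul_le_mul hQ1n h1Sinv (specNorm_nonneg _) zero_le_one
        · exact mul_le_mul hQ2n (specNorm_mul_le _ _) (specNorm_nonneg _) zero_le_one
    _ ≤ 1 * specNorm P + 1 * (specNorm P * 1) :=
        add_le_add le_rfl (mul_le_mul_of_nonneg_left
          (mul_le_mul_of_nonneg_left hSinv_le (specNorm_nonneg _)) zero_le_one)
    _ = 2 * specNorm P := by ring
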